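/- Let p : L^n → L be a function on a bounded chain L. The following are equivalent: (i) p is a polynomial function; (ii) p is median decomposable, i.e., p(x) = med(p(x_k^0), x_k, p(x_k^1)) for every x ∈ L^n and every k ∈ {1,…,n}; (iii) p is order-preserving and is cl(ran(p))-min homogeneous and cl(ran(p))-max homogeneous; (iv) p is order-preserving, range-idempotent, horizontally minitive and horizontally maxitive. -/

import Mathlib

open Function

/-- A lattice polynomial function on a chain `M`: a member of the smallest set of `n`-ary
functions containing all projections and constants and closed under pointwise `⊓` and `⊔`. -/
inductive IsLatticePolynomial {M : Type*} [LinearOrder M] {n : ℕ} :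
    ((Fin n → M) → M) → Prop
  | proj (i : Fin n) : IsLatticePolynomial fun x => x i
  | const (c : M) : IsLatticePolynomial fun _ => c
  | inf {p q : (Fin n → M) → M} :
      IsLatticePolynomial p → IsLatticePolynomial q →
      IsLatticePolynomial fun x => p x ⊓ q x
  | sup {p q : (Fin n → M) → M} :
      IsLatticePolynomial p → IsLatticePolynomial q →
      IsLatticePolynomial fun x => p x ⊔ q x

/-- A Sugeno integral: an idempotent lattice polynomial function. -/
def IsSugenoIntegral {M : Type*} [LinearOrder M] {n : ℕ} (q : (Fin n → M) → M) : Prop :=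
  IsLatticePolynomial q ∧ ∀ c : M, q (fun _ => c) = c

/-- `φ` satisfies the boundary conditions: `φ 0 ≤ φ x ≤ φ 1` for all `x`. -/
def BoundaryCond {α : Type*} {M : Type*} [LE α] [OrderTop α] [OrderBot α] [Preorder M]
    (φ : α → M) : Prop :=
  ∀ x : α, φ ⊥ ≤ φ x ∧ φ x ≤ φ ⊤

/-- The median of three elements of a lattice. -/
def med {α : Type*} [Lattice α] (a b c : α) : α :=
  (a ⊓ b) ⊔ (a ⊓ c) ⊔ (b ⊓ c)

/-- Two `n`-tuples are comonotonic if some permutation sorts both simultaneously. -/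
def Comonotone {M : Type*} [Preorder M] {n : ℕ} (y y' : Fin n → M) : Prop :=
  ∃ σ : Equiv.Perm (Fin n), Monotone (y ∘ σ) ∧ Monotone (y' ∘ σ)

section PiDefs

variable {n : ℕ} {M : Type*} {L : Fin n → Type*}
variable [∀ i, LinearOrder (L i)] [∀ i, BoundedOrder (L i)]
variable [LinearOrder M] [BoundedOrder M]

/-- A pseudo-polynomial function: composition of a lattice polynomial function with unary
maps satisfying the boundary conditions. -/
def IsPseudoPolynomial (f : (∀ i, L i) → M) : Prop :=
  ∃ (p : (Fin n → M) → M) (φ : ∀ i, L i → M),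
    IsLatticePolynomial p ∧ (∀ i, BoundaryCond (φ i)) ∧
      ∀ x, f x = p fun i => φ i (x i)

/-- A pseudo-Sugeno integral: composition of a Sugeno integral with unary maps satisfying
the boundary conditions. -/
def IsPseudoSugenoIntegral (f : (∀ i, L i) → M) : Prop :=
  ∃ (q : (Fin n → M) → M) (φ : ∀ i, L i → M),
    IsSugenoIntegral q ∧ (∀ i, BoundaryCond (φ i)) ∧
      ∀ x, f x = q fun i => φ i (x i)

/-- A Sugeno utility function: composition of a Sugeno integral with local utility
(order-preserving) functions. -/
def IsSugenoUtility (f : (∀ i, L i) → M) : Prop :=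
  ∃ (q : (Fin n → M) → M) (φ : ∀ i, L i → M),
    IsSugenoIntegral q ∧ (∀ i, Monotone (φ i)) ∧
      ∀ x, f x = q fun i => φ i (x i)

/-- `f` is pseudo-median decomposable w.r.t. the unary maps `φ`. -/
def PseudoMedianDecomp (f : (∀ i, L i) → M) (φ : ∀ i, L i → M) : Prop :=
  ∀ (x : ∀ i, L i) (k : Fin n),
    f x = med (f (update x k ⊥)) (φ k (x k)) (f (update x k ⊤))

/-- `d ∈ φ̄⁻¹(c)`: all components of `d` are mapped to `c` by the corresponding `φ i`. -/
def FiberAll (φ : ∀ i, L i → M) (c : M) (d : ∀ i, L i) : Prop :=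
  ∀ i, φ i (d i) = c

/-- `f` is pseudo-min homogeneous w.r.t. `φ` with common range `R`. -/
def PseudoMinHomog (f : (∀ i, L i) → M) (φ : ∀ i, L i → M) (R : Set M) : Prop :=
  ∀ (x : ∀ i, L i), ∀ c ∈ R, ∀ d : ∀ i, L i, FiberAll φ c d →
    f (fun i => x i ⊓ d i) = f x ⊓ c

/-- `f` is pseudo-max homogeneous w.r.t. `φ` with common range `R`. -/
def PseudoMaxHomog (f : (∀ i, L i) → M) (φ : ∀ i, L i → M) (R : Set M) : Prop :=
  ∀ (x : ∀ i, L i), ∀ c ∈ R, ∀ d : ∀ i, L i, FiberAll φ c d →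
    f (fun i => x i ⊔ d i) = f x ⊔ c

/-- Condition (PI): `f d = c` whenever `d ∈ φ̄⁻¹(c)`, `c ∈ R`. -/
def PseudoPI (f : (∀ i, L i) → M) (φ : ∀ i, L i → M) (R : Set M) : Prop :=
  ∀ c ∈ R, ∀ d : ∀ i, L i, FiberAll φ c d → f d = c

/-- `[x]_d`: the tuple whose `i`th component is `0` if `x i ≤ d i`, and `x i` otherwise. -/
def cutBelow (x d : ∀ i, L i) : ∀ i, L i := fun i => if x i ≤ d i then ⊥ else x i

/-- `[x]^d`: the tuple whose `i`th component is `1` if `x i ≥ d i`, and `x i` otherwise. -/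
def cutAbove (x d : ∀ i, L i) : ∀ i, L i := fun i => if d i ≤ x i then ⊤ else x i

/-- `f` is pseudo-horizontally maxitive w.r.t. `φ` with common range `R`. -/
def PseudoHorizMax (f : (∀ i, L i) → M) (φ : ∀ i, L i → M) (R : Set M) : Prop :=
  ∀ (x : ∀ i, L i), ∀ c ∈ R, ∀ d : ∀ i, L i, FiberAll φ c d →
    f x = f (fun i => x i ⊓ d i) ⊔ f (cutBelow x d)

/-- `f` is pseudo-horizontally minitive w.r.t. `φ` with common range `R`. -/
def PseudoHorizMin (f : (∀ i, L i) → M) (φ : ∀ i, L i → M) (R : Set M) : Prop :=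
  ∀ (x : ∀ i, L i), ∀ c ∈ R, ∀ d : ∀ i, L i, FiberAll φ c d →
    f x = f (fun i => x i ⊔ d i) ⊓ f (cutAbove x d)

/-- `f` is pseudo-comonotonic minitive w.r.t. `φ`. -/
def PseudoComonMin (f : (∀ i, L i) → M) (φ : ∀ i, L i → M) : Prop :=
  ∀ x x' : ∀ i, L i,
    Comonotone (fun i => φ i (x i)) (fun i => φ i (x' i)) →
      f (fun i => x i ⊓ x' i) = f x ⊓ f x'

/-- `f` is pseudo-comonotonic maxitive w.r.t. `φ`. -/
def PseudoComonMax (f : (∀ i, L i) → M) (φ : ∀ i, L i → M) : Prop :=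
  ∀ x x' : ∀ i, L i,
    Comonotone (fun i => φ i (x i)) (fun i => φ i (x' i)) →
      f (fun i => x i ⊔ x' i) = f x ⊔ f x'

/-- The disjunctive normal form polynomial determined by the values of `f` on the
characteristic vectors `e_I`: `y ↦ ⋁_{I ⊆ [n]} (f(e_I) ∧ ⋀_{i ∈ I} y i)`. -/
def qDNF (f : (∀ i, L i) → M) : (Fin n → M) → M :=
  fun y => Finset.univ.sup fun I : Finset (Fin n) =>
    f (fun i => if i ∈ I then ⊤ else ⊥) ⊓ I.inf y

end PiDefs

section ChainDefs

variable {n : ℕ} {M : Type*} [LinearOrder M] [BoundedOrder M]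

/-- The DNF polynomial `y ↦ ⋁_{I ⊆ [n]} (p(e_I) ∧ ⋀_{i ∈ I} y i)` for `p : M^n → M`. -/
def polyDNF (p : (Fin n → M) → M) : (Fin n → M) → M :=
  fun y => Finset.univ.sup fun I : Finset (Fin n) =>
    p (fun i => if i ∈ I then ⊤ else ⊥) ⊓ I.inf y

/-- The convex hull of the range of `p` (in a chain). -/
def clRan (p : (Fin n → M) → M) : Set M :=
  {c : M | ∃ a ∈ Set.range p, ∃ b ∈ Set.range p, a ≤ c ∧ c ≤ b}

/-- Median decomposability of `p : M^n → M`. -/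
def MedianDecomp (p : (Fin n → M) → M) : Prop :=
  ∀ (x : Fin n → M) (k : Fin n),
    p x = med (p (update x k ⊥)) (x k) (p (update x k ⊤))

/-- `S`-min homogeneity: `p(x ∧ c) = p(x) ∧ c` for all `c ∈ S`. -/
def MinHomogOn (p : (Fin n → M) → M) (S : Set M) : Prop :=
  ∀ (x : Fin n → M), ∀ c ∈ S, p (fun i => x i ⊓ c) = p x ⊓ c

/-- `S`-max homogeneity: `p(x ∨ c) = p(x) ∨ c` for all `c ∈ S`. -/
def MaxHomogOn (p : (Fin n → M) → M) (S : Set M) : Prop :=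
  ∀ (x : Fin n → M), ∀ c ∈ S, p (fun i => x i ⊔ c) = p x ⊔ c

/-- Range-idempotence: `p(c,…,c) = c` for every `c` in the convex hull of the range. -/
def RangeIdempotent (p : (Fin n → M) → M) : Prop :=
  ∀ c ∈ clRan p, p (fun _ => c) = c

/-- Horizontal minitivity: `p(x) = p(x ∨ c) ∧ p([x]^c)`. -/
def HorizMin (p : (Fin n → M) → M) : Prop :=
  ∀ (x : Fin n → M) (c : M),
    p x = p (fun i => x i ⊔ c) ⊓ p (fun i => if c ≤ x i then ⊤ else x i)

/-- Horizontal maxitivity: `p(x) = p(x ∧ c) ∨ p([x]_c)`. -/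
def HorizMax (p : (Fin n → M) → M) : Prop :=
  ∀ (x : Fin n → M) (c : M),
    p x = p (fun i => x i ⊓ c) ⊔ p (fun i => if x i ≤ c then ⊥ else x i)

end ChainDefs

section AuxProofs

set_option linter.unusedSectionVars false
set_option linter.unusedVariables false

variable {n : ℕ} {M : Type*} [LinearOrder M] [BoundedOrder M]

lemma med_eq₁ {a b c : M} (h : a ≤ c) : med a b c = (b ⊓ c) ⊔ a := by
  unfold med
  rw [inf_eq_left.mpr h, sup_eq_right.mpr (inf_le_left : a ⊓ b ≤ a), sup_comm]

lemma med_eq₂ {a b c : M} (h : a ≤ c) : med a b c = (b ⊔ a) ⊓ c := by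
  rw [med_eq₁ h, sup_comm, sup_inf_left, sup_eq_right.mpr h, inf_comm, sup_comm b a, inf_comm]

lemma med_bot_top (b : M) : med ⊥ b ⊤ = b := by simp [med]

lemma med_self (a b : M) : med a b a = a := by
  simp [med, inf_comm]

lemma med_mono_mid {a b b' c : M} (h : b ≤ b') : med a b c ≤ med a b' c := by
  unfold med
  exact sup_le_sup (sup_le_sup_right (inf_le_inf_left _ h) _) (inf_le_inf_right _ h)

lemma update_bot_le (x : Fin n → M) (k : Fin n) : update x k ⊥ ≤ x := by
  intro i
  rcases eq_or_ne i k with rfl | h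
  · simp
  · simp [Function.update_of_ne h]

lemma le_update_top (x : Fin n → M) (k : Fin n) : x ≤ update x k ⊤ := by
  intro i
  rcases eq_or_ne i k with rfl | h
  · simp
  · simp [Function.update_of_ne h]

lemma IsLatticePolynomial.monotone {p : (Fin n → M) → M} (h : IsLatticePolynomial p) :
    Monotone p := by
  induction h with
  | proj i => exact fun a b hab => hab i
  | const c => exact monotone_const
  | inf hp hq ihp ihq => exact fun a b hab => inf_le_inf (ihp hab) (ihq hab)
  | sup hp hq ihp ihq => exact fun a b hab => sup_le_sup (ihp hab) (ihq hab)

lemma IsLatticePolynomial.medianDecomp {p : (Fin n → M) → M}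
    (h : IsLatticePolynomial p) : MedianDecomp p := by
  induction h with
  | proj i =>
    intro x k
    rcases eq_or_ne i k with rfl | hik
    · simp [med_bot_top]
    · simp [Function.update_of_ne hik, med_self]
  | const c => intro x k; simp [med_self]
  | @inf p q hp hq ihp ihq =>
    intro x k
    have h1 : p (update x k ⊥) ≤ p (update x k ⊤) :=
      hp.monotone ((update_bot_le x k).trans (le_update_top x k))
    have h2 : q (update x k ⊥) ≤ q (update x k ⊤) :=
      hq.monotone ((update_bot_le x k).trans (le_update_top x k))
    show p x ⊓ q x = _
    rw [ihp x k, ihq x k, med_eq₂ h1, med_eq₂ h2, med_eq₂ (inf_le_inf h1 h2),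
      sup_inf_left]
    ac_rfl
  | @sup p q hp hq ihp ihq =>
    intro x k
    have h1 : p (update x k ⊥) ≤ p (update x k ⊤) :=
      hp.monotone ((update_bot_le x k).trans (le_update_top x k))
    have h2 : q (update x k ⊥) ≤ q (update x k ⊤) :=
      hq.monotone ((update_bot_le x k).trans (le_update_top x k))
    show p x ⊔ q x = _
    rw [ihp x k, ihq x k, med_eq₁ h1, med_eq₁ h2, med_eq₁ (sup_le_sup h1 h2),
      inf_sup_left]
    ac_rfl

lemma MedianDecomp.coord {p : (Fin n → M) → M} (h : MedianDecomp p)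
    (x : Fin n → M) (k : Fin n) {a b : M} (hab : a ≤ b) :
    p (update x k a) ≤ p (update x k b) := by
  rw [h (update x k a) k, h (update x k b) k]
  simp only [Function.update_idem, Function.update_self]
  exact med_mono_mid hab

lemma MedianDecomp.monotone {p : (Fin n → M) → M} (h : MedianDecomp p) :
    Monotone p := by
  intro x y hxy
  have key : ∀ S : Finset (Fin n), p x ≤ p (S.piecewise y x) := by
    intro S
    induction S using Finset.induction_on with
    | empty => simp
    | @insert k S hk ih =>
      rw [Finset.piecewise_insert]
      calc p x ≤ p (S.piecewise y x) := ih
        _ = p (update (S.piecewise y x) k (x k)) := by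
              rw [show (x k) = (S.piecewise y x) k from
                (Finset.piecewise_eq_of_notMem _ _ _ hk).symm, Function.update_eq_self]
        _ ≤ p (update (S.piecewise y x) k (y k)) := h.coord _ _ (hxy k)
  have := key Finset.univ
  rwa [Finset.piecewise_univ] at this

lemma poly_finsetSup {ι : Type*} [DecidableEq ι] (s : Finset ι)
    (f : ι → (Fin n → M) → M) (hf : ∀ i ∈ s, IsLatticePolynomial (f i)) :
    IsLatticePolynomial (fun x => s.sup (fun i => f i x)) := by
  induction s using Finset.induction_on with
  | empty => simpa using IsLatticePolynomial.const (⊥ : M)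
  | @insert a s ha ih =>
    have : (fun x => (insert a s).sup fun i => f i x)
        = fun x => f a x ⊔ s.sup (fun i => f i x) := by
      funext x; rw [Finset.sup_insert]
    rw [this]
    exact (hf a (Finset.mem_insert_self a s)).sup
      (ih fun i hi => hf i (Finset.mem_insert_of_mem hi))

lemma poly_finsetInf {ι : Type*} [DecidableEq ι] (s : Finset ι)
    (f : ι → (Fin n → M) → M) (hf : ∀ i ∈ s, IsLatticePolynomial (f i)) :
    IsLatticePolynomial (fun x => s.inf (fun i => f i x)) := by
  induction s using Finset.induction_on with
  | empty => simpa using IsLatticePolynomial.const (⊤ : M)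
  | @insert a s ha ih =>
    have : (fun x => (insert a s).inf fun i => f i x)
        = fun x => f a x ⊓ s.inf (fun i => f i x) := by
      funext x; rw [Finset.inf_insert]
    rw [this]
    exact (hf a (Finset.mem_insert_self a s)).inf
      (ih fun i hi => hf i (Finset.mem_insert_of_mem hi))

lemma polyDNF_poly (p : (Fin n → M) → M) : IsLatticePolynomial (polyDNF p) := by
  apply poly_finsetSup
  intro I _
  exact (IsLatticePolynomial.const _).inf
    (poly_finsetInf I (fun i => fun y => y i) (fun i _ => .proj i))

lemma MedianDecomp.eq_polyDNF {p : (Fin n → M) → M} (h : MedianDecomp p) (x : Fin n → M) :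
    p x = polyDNF p x := by
  have hm := h.monotone
  have hq : MedianDecomp (polyDNF p) := (polyDNF_poly p).medianDecomp
  suffices key : ∀ S : Finset (Fin n), ∀ x : Fin n → M,
      (∀ i, i ∉ S → x i = ⊥ ∨ x i = ⊤) → p x = polyDNF p x by
    exact key Finset.univ x (fun i hi => absurd (Finset.mem_univ i) hi)
  intro S
  induction S using Finset.induction_on with
  | empty =>
    intro x hx
    set I₀ : Finset (Fin n) := Finset.univ.filter (fun i => x i = ⊤) with hI₀def
    have hmem : ∀ i, i ∈ I₀ ↔ x i = ⊤ := by
      intro i; simp [hI₀def]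
    apply le_antisymm
    · have h1 : p (fun i => if i ∈ I₀ then ⊤ else ⊥) ⊓ I₀.inf x ≤ polyDNF p x := by
        exact Finset.le_sup (f := fun I : Finset (Fin n) =>
          p (fun i => if i ∈ I then ⊤ else ⊥) ⊓ I.inf x) (Finset.mem_univ I₀)
      have hinf : I₀.inf x = ⊤ :=
        top_unique (Finset.le_inf fun i hi => ((hmem i).mp hi).ge)
      have hxe : (fun i => if i ∈ I₀ then (⊤:M) else ⊥) = x := by
        funext i
        by_cases hi : x i = ⊤
        · simp [(hmem i).mpr hi, hi]
        · rcases hx i (Finset.notMem_empty i) with hb | ht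
          · have hni : i ∉ I₀ := fun hh => hi ((hmem i).mp hh)
            simp [hni, hb]
          · exact absurd ht hi
      rw [hinf, inf_top_eq, hxe] at h1
      exact h1
    · unfold polyDNF
      apply Finset.sup_le
      intro J _
      by_cases hJ : J ⊆ I₀
      · have h1 : (fun i => if i ∈ J then (⊤:M) else ⊥) ≤ x := by
          intro i
          by_cases hi : i ∈ J
          · simp only [hi, if_pos]
            exact ((hmem i).mp (hJ hi)).ge
          · simp [hi]
        exact inf_le_of_left_le (hm h1)
      · obtain ⟨j, hjJ, hjI⟩ := Finset.not_subset.mp hJ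
        have hxj : x j = ⊥ := by
          rcases hx j (Finset.notMem_empty j) with hb | ht
          · exact hb
          · exact absurd ((hmem j).mpr ht) hjI
        refine inf_le_of_right_le ?_
        exact le_trans ((Finset.inf_le hjJ).trans_eq hxj) bot_le
  | @insert k S' hk ih =>
    intro x hx
    have hbot : ∀ i, i ∉ S' → update x k ⊥ i = ⊥ ∨ update x k ⊥ i = ⊤ := by
      intro i hi
      rcases eq_or_ne i k with rfl | hik
      · simp
      · rw [Function.update_of_ne hik]
        exact hx i (by simp [Finset.mem_insert, hik]; exact hi)
    have htop : ∀ i, i ∉ S' → update x k ⊤ i = ⊥ ∨ update x k ⊤ i = ⊤ := by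
      intro i hi
      rcases eq_or_ne i k with rfl | hik
      · simp
      · rw [Function.update_of_ne hik]
        exact hx i (by simp [Finset.mem_insert, hik]; exact hi)
    rw [h x k, ih _ hbot, ih _ htop, ← hq x k]

lemma mem_clRan {p : (Fin n → M) → M} {c : M}
    (h1 : p (fun _ => ⊥) ≤ c) (h2 : c ≤ p (fun _ => ⊤)) : c ∈ clRan p :=
  ⟨_, ⟨_, rfl⟩, _, ⟨_, rfl⟩, h1, h2⟩

lemma clRan_bounds {p : (Fin n → M) → M} (hm : Monotone p) {c : M} (hc : c ∈ clRan p) :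
    p (fun _ => ⊥) ≤ c ∧ c ≤ p (fun _ => ⊤) := by
  obtain ⟨a, ⟨u, rfl⟩, b, ⟨v, rfl⟩, h1, h2⟩ := hc
  exact ⟨(hm fun i => bot_le).trans h1, h2.trans (hm fun i => le_top)⟩

lemma MedianDecomp.rangeIdempotent {p : (Fin n → M) → M} (h : MedianDecomp p) :
    RangeIdempotent p := by
  have hm := h.monotone
  intro c hc
  obtain ⟨h1, h2⟩ := clRan_bounds hm hc
  rw [h.eq_polyDNF]
  apply le_antisymm
  · apply Finset.sup_le
    intro I _
    rcases I.eq_empty_or_nonempty with rfl | hne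
    · simp only [Finset.inf_empty, inf_top_eq]
      refine le_trans (le_of_eq (congrArg p (funext fun i => by simp))) h1
    · rw [Finset.inf_const hne]
      exact inf_le_right
  · refine le_trans ?_ (Finset.le_sup (f := fun I : Finset (Fin n) =>
      p (fun i => if i ∈ I then ⊤ else ⊥) ⊓ I.inf (fun _ => c))
      (Finset.mem_univ Finset.univ))
    refine le_inf ?_ (Finset.le_inf fun i _ => le_rfl)
    refine le_trans h2 (le_of_eq ?_)
    congr 1
    funext i
    simp

lemma MedianDecomp.minHomogOn {p : (Fin n → M) → M} (h : MedianDecomp p) :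
    MinHomogOn p (clRan p) := by
  have hm := h.monotone
  intro x c hc
  obtain ⟨h1, h2⟩ := clRan_bounds hm hc
  apply le_antisymm
  · exact le_inf (hm fun i => inf_le_left)
      ((hm fun i => inf_le_right).trans (h.rangeIdempotent c hc).le)
  · rw [h.eq_polyDNF x, h.eq_polyDNF (fun i => x i ⊓ c)]
    obtain ⟨I₀, _, hI₀⟩ := Finset.exists_mem_eq_sup Finset.univ Finset.univ_nonempty
      (fun I : Finset (Fin n) => p (fun i => if i ∈ I then ⊤ else ⊥) ⊓ I.inf x)
    show Finset.univ.sup _ ⊓ c ≤ _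
    rw [hI₀]
    refine le_trans ?_ (Finset.le_sup (f := fun I : Finset (Fin n) =>
      p (fun i => if i ∈ I then ⊤ else ⊥) ⊓ I.inf (fun i => x i ⊓ c))
      (Finset.mem_univ I₀))
    rw [inf_assoc]
    exact inf_le_inf_left _ (Finset.le_inf fun i hi =>
      inf_le_inf (Finset.inf_le hi) le_rfl)

lemma MedianDecomp.maxHomogOn {p : (Fin n → M) → M} (h : MedianDecomp p) :
    MaxHomogOn p (clRan p) := by
  have hm := h.monotone
  intro x c hc
  obtain ⟨h1, h2⟩ := clRan_bounds hm hc
  apply le_antisymm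
  · rw [h.eq_polyDNF (fun i => x i ⊔ c)]
    apply Finset.sup_le
    intro I _
    have hle : I.inf (fun i => x i ⊔ c) ≤ I.inf x ⊔ c := by
      rcases I.eq_empty_or_nonempty with rfl | hne
      · simp
      · obtain ⟨i₀, hi₀, heq⟩ := Finset.exists_mem_eq_inf I hne x
        rw [heq]
        exact Finset.inf_le (f := fun i => x i ⊔ c) hi₀
    calc p (fun i => if i ∈ I then ⊤ else ⊥) ⊓ I.inf (fun i => x i ⊔ c)
        ≤ p (fun i => if i ∈ I then ⊤ else ⊥) ⊓ (I.inf x ⊔ c) := inf_le_inf_left _ hle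
      _ = (p (fun i => if i ∈ I then ⊤ else ⊥) ⊓ I.inf x)
          ⊔ (p (fun i => if i ∈ I then ⊤ else ⊥) ⊓ c) := inf_sup_left _ _ _
      _ ≤ p x ⊔ c := by
          refine sup_le_sup ?_ inf_le_right
          rw [h.eq_polyDNF x]
          exact Finset.le_sup (f := fun I : Finset (Fin n) =>
            p (fun i => if i ∈ I then ⊤ else ⊥) ⊓ I.inf x) (Finset.mem_univ I)
  · exact sup_le (hm fun i => le_sup_left)
      ((h.rangeIdempotent c hc).ge.trans (hm fun i => le_sup_right))

lemma rangeIdem_of_homog {p : (Fin n → M) → M} (hm : Monotone p) (hmin : MinHomogOn p (clRan p))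
    (hmax : MaxHomogOn p (clRan p)) : RangeIdempotent p := by
  intro c hc
  obtain ⟨a, ⟨u, rfl⟩, b, hb, h1, h2⟩ := hc
  have hc' : p u ∈ clRan p ∨ True := Or.inr trivial
  have hcR : c ∈ clRan p := ⟨p u, ⟨u, rfl⟩, b, hb, h1, h2⟩
  have h3 : p (fun i => u i ⊔ c) = p u ⊔ c := hmax u c hcR
  have h4 : p (fun i => (u i ⊔ c) ⊓ c) = p (fun i => u i ⊔ c) ⊓ c :=
    hmin (fun i => u i ⊔ c) c hcR
  have h5 : (fun i => (u i ⊔ c) ⊓ c) = fun _ => c :=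
    funext fun i => inf_eq_right.mpr le_sup_right
  rw [h5, h3, sup_eq_right.mpr h1, inf_idem] at h4
  exact h4

lemma horizMin_of_homog {p : (Fin n → M) → M} (hm : Monotone p) (hmin : MinHomogOn p (clRan p))
    (hmax : MaxHomogOn p (clRan p)) : HorizMin p := by
  intro x c
  set y : Fin n → M := fun i => if c ≤ x i then ⊤ else x i with hy
  apply le_antisymm
  · refine le_inf (hm fun i => le_sup_left) (hm fun i => ?_)
    dsimp only [y]
    split
    · exact le_top
    · exact le_rfl
  · set m := p (fun i => x i ⊔ c) ⊓ p y with hmdef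
    have hmbot : p (fun _ => ⊥) ≤ m :=
      le_inf (hm fun i => bot_le) (hm fun i => bot_le)
    have hmtop : m ≤ p (fun _ => ⊤) := inf_le_left.trans (hm fun i => le_top)
    have hmR : m ∈ clRan p := mem_clRan hmbot hmtop
    rcases le_or_gt m c with h1 | h1
    · have h2 : p (fun i => y i ⊓ m) = p y ⊓ m := hmin y m hmR
      have h3 : (fun i => y i ⊓ m) ≤ x := by
        intro i
        dsimp only [y]
        split
        · exact inf_le_right.trans (h1.trans (by assumption))
        · exact inf_le_left
      calc m = p y ⊓ m := (inf_eq_right.mpr inf_le_right).symm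
        _ = p (fun i => y i ⊓ m) := h2.symm
        _ ≤ p x := hm h3
    · have hd : c ⊔ p (fun _ => ⊥) ∈ clRan p :=
        mem_clRan le_sup_right (sup_le (h1.le.trans hmtop) (hm fun i => le_top))
      have h2 : p (fun i => x i ⊔ (c ⊔ p (fun _ => ⊥))) = p x ⊔ (c ⊔ p (fun _ => ⊥)) :=
        hmax x _ hd
      have h3 : m ≤ p x ⊔ (c ⊔ p (fun _ => ⊥)) := by
        rw [← h2]
        exact inf_le_left.trans (hm fun i => sup_le_sup_left le_sup_left _)
      rcases le_sup_iff.mp h3 with h5 | h5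
      · exact h5
      · rcases le_sup_iff.mp h5 with h6 | h6
        · exact absurd h6 (not_le.mpr h1)
        · exact h6.trans (hm fun i => bot_le)

lemma horizMax_of_homog {p : (Fin n → M) → M} (hm : Monotone p) (hmin : MinHomogOn p (clRan p))
    (hmax : MaxHomogOn p (clRan p)) : HorizMax p := by
  intro x c
  set z : Fin n → M := fun i => if x i ≤ c then ⊥ else x i with hz
  apply le_antisymm
  · set m := p (fun i => x i ⊓ c) ⊔ p z with hmdef
    have hmbot : p (fun _ => ⊥) ≤ m := le_sup_of_le_left (hm fun i => bot_le)
    have hmtop : m ≤ p (fun _ => ⊤) :=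
      sup_le (hm fun i => le_top) (hm fun i => le_top)
    have hmR : m ∈ clRan p := mem_clRan hmbot hmtop
    rcases le_or_gt c m with h1 | h1
    · have h2 : p (fun i => z i ⊔ m) = p z ⊔ m := hmax z m hmR
      have h3 : x ≤ fun i => z i ⊔ m := by
        intro i
        dsimp only [z]
        split
        · exact le_trans ((by assumption : x i ≤ c).trans h1) le_sup_right
        · exact le_sup_left
      calc p x ≤ p (fun i => z i ⊔ m) := hm h3
        _ = p z ⊔ m := h2
        _ = m := sup_eq_right.mpr le_sup_right
    · have hd : c ⊓ p (fun _ => ⊤) ∈ clRan p :=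
        mem_clRan (le_inf (hmbot.trans h1.le) (hm fun i => bot_le)) inf_le_right
      have h2 : p (fun i => x i ⊓ (c ⊓ p (fun _ => ⊤))) = p x ⊓ (c ⊓ p (fun _ => ⊤)) :=
        hmin x _ hd
      have h3 : p x ⊓ (c ⊓ p (fun _ => ⊤)) ≤ m := by
        rw [← h2]
        exact le_sup_of_le_left (hm fun i => inf_le_inf_left _ inf_le_left)
      have h4 : p x ⊓ c ≤ m := by
        have he : p x ⊓ (c ⊓ p (fun _ => ⊤)) = p x ⊓ c := by
          rw [inf_comm c, ← inf_assoc, inf_eq_left.mpr (hm fun i => le_top)]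
        rwa [he] at h3
      rcases le_total (p x) c with h5 | h5
      · rwa [inf_eq_left.mpr h5] at h4
      · rw [inf_eq_right.mpr h5] at h4
        exact absurd h4 (not_le.mpr h1)
  · exact sup_le (hm fun i => inf_le_left)
      (hm fun i => by dsimp only [z]; by_cases h : x i ≤ c <;> simp [h])

lemma medianDecomp_of_horiz {p : (Fin n → M) → M} (hm : Monotone p)
    (hri : RangeIdempotent p) (hhmin : HorizMin p) (hhmax : HorizMax p) :
    MedianDecomp p := by
  intro x k
  set t := x k with ht
  set A := p (update x k ⊥) with hA'
  set C := p (update x k ⊤) with hC'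
  set pb := p (fun _ => ⊥) with hpb'
  set pt := p (fun _ => ⊤) with hpt'
  have hAC : A ≤ C := hm ((update_bot_le x k).trans (le_update_top x k))
  have hA : A ≤ p x := hm (update_bot_le x k)
  have hC : p x ≤ C := hm (le_update_top x k)
  have hpbA : pb ≤ A := hm (fun i => bot_le)
  have hCpt : C ≤ pt := hm (fun i => le_top)
  have hbt : pb ≤ pt := hpbA.trans (hA.trans (hC.trans hCpt))
  have hzA : p (fun i => if x i ≤ t then ⊥ else x i) ≤ A := by
    apply hm; intro i
    by_cases hx : x i ≤ t
    · simp [hx]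
    · have hik : i ≠ k := by rintro rfl; exact hx le_rfl
      simp [hx, Function.update_of_ne hik]
  have hyC : C ≤ p (fun i => if t ≤ x i then ⊤ else x i) := by
    apply hm; intro i
    rcases eq_or_ne i k with rfl | hik
    · simp [le_refl, ht]
    · rw [Function.update_of_ne hik]
      by_cases h : t ≤ x i <;> simp [h]
  rw [med_eq₂ hAC]
  apply le_antisymm
  · refine le_inf ?_ hC
    rcases le_total t pb with h1 | h1
    · have hpbR : pb ∈ clRan p := mem_clRan le_rfl hbt
      have h2 : p (fun i => x i ⊓ t) ≤ pb := by
        conv_rhs => rw [← hri pb hpbR]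
        exact hm fun i => inf_le_right.trans h1
      calc p x = p (fun i => x i ⊓ t) ⊔ p (fun i => if x i ≤ t then ⊥ else x i) :=
            hhmax x t
        _ ≤ A ⊔ A := sup_le_sup (h2.trans hpbA) hzA
        _ ≤ t ⊔ A := by rw [sup_idem]; exact le_sup_right
    · rcases le_total pt t with h2 | h2
      · exact le_trans (hC.trans (hCpt.trans h2)) le_sup_left
      · have htR : t ∈ clRan p := mem_clRan h1 h2
        have h3 : p (fun i => x i ⊓ t) ≤ t := by
          conv_rhs => rw [← hri t htR]
          exact hm fun i => inf_le_right
        calc p x = p (fun i => x i ⊓ t) ⊔ p (fun i => if x i ≤ t then ⊥ else x i) :=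
              hhmax x t
          _ ≤ t ⊔ A := sup_le_sup h3 hzA
  · rw [inf_sup_right]
    refine sup_le ?_ (inf_le_of_left_le hA)
    rcases le_total t pb with h1 | h1
    · exact inf_le_of_left_le (h1.trans (hpbA.trans hA))
    · rcases le_total pt t with h2 | h2
      · have hptR : pt ∈ clRan p := mem_clRan hbt le_rfl
        have h3 : pt ≤ p (fun i => x i ⊔ t) := by
          conv_lhs => rw [← hri pt hptR]
          exact hm fun i => h2.trans le_sup_right
        have h4 : C ≤ p x := by
          rw [hhmin x t]
          exact le_inf (hCpt.trans h3) hyC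
        exact inf_le_of_right_le h4
      · have htR : t ∈ clRan p := mem_clRan h1 h2
        have h3 : t ≤ p (fun i => x i ⊔ t) := by
          conv_lhs => rw [← hri t htR]
          exact hm fun i => le_sup_right
        rw [hhmin x t]
        exact le_inf (inf_le_of_left_le h3) (inf_le_of_right_le hyC)

end AuxProofs

/-- characterizations of polynomial functions on a bounded chain:
(i) polynomial ↔ (ii) median decomposable ↔ (iii) order-preserving and
`cl(ran p)`-min and -max homogeneous ↔ (iv) order-preserving, range-idempotent,
horizontally minitive and maxitive. -/
theorem polynomial_characterizations
    {n : ℕ} {M : Type*} [LinearOrder M] [BoundedOrder M] (p : (Fin n → M) → M) :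
    (IsLatticePolynomial p ↔ MedianDecomp p) ∧
    (IsLatticePolynomial p ↔
      Monotone p ∧ MinHomogOn p (clRan p) ∧ MaxHomogOn p (clRan p)) ∧
    (IsLatticePolynomial p ↔
      Monotone p ∧ RangeIdempotent p ∧ HorizMin p ∧ HorizMax p) := by
  refine ⟨?_, ?_, ?_⟩
  · exact ⟨IsLatticePolynomial.medianDecomp, fun h => by
      rw [show p = polyDNF p from funext h.eq_polyDNF]; exact polyDNF_poly p⟩
  · constructor
    · intro h
      have hd := h.medianDecomp
      exact ⟨hd.monotone, hd.minHomogOn, hd.maxHomogOn⟩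
    · rintro ⟨hm, hmin, hmax⟩
      have hd := medianDecomp_of_horiz hm (rangeIdem_of_homog hm hmin hmax)
        (horizMin_of_homog hm hmin hmax) (horizMax_of_homog hm hmin hmax)
      rw [show p = polyDNF p from funext hd.eq_polyDNF]; exact polyDNF_poly p
  · constructor
    · intro h
      have hd := h.medianDecomp
      exact ⟨hd.monotone, hd.rangeIdempotent,
        horizMin_of_homog hd.monotone hd.minHomogOn hd.maxHomogOn,
        horizMax_of_homog hd.monotone hd.minHomogOn hd.maxHomogOn⟩
    · rintro ⟨hm, hri, hhmin, hhmax⟩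
      have hd := medianDecomp_of_horiz hm hri hhmin hhmax
      rw [show p = polyDNF p from funext hd.eq_polyDNF]; exact polyDNF_poly p
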